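/- Let X and A be Borel spaces, D a nonempty Borel subset of X×A with nonempty x-sections A(x), q a Borel measurable transition probability kernel from X×A to X, ω : X → [1,∞) Borel measurable, u : D → ℝ Borel measurable with |u(x,a)| ≤ zω(x) on D for some z > 0, and let δ : ℝ → ℝ and γ : [0,∞) → [0,∞) satisfy: γ is increasing with γ(s) < s for s > 0; |δ(z₁) − δ(z₂)| ≤ γ(|z₁ − z₂|) for all z₁, z₂ ∈ ℝ; δ is increasing with δ(0) = 0; γ is subadditive and γ(ω(x)y) ≤ ω(x)γ(y) for x ∈ X, y > 0; ∫_X ω(y) q(dy|x,a) ≤ αω(x) on D, with either α ≤ 1 or (α > 1 and αγ(s) < s for all s > 0). Let f : X → A be Borel measurable with f(x) ∈ A(x) for all x, and define T_f v(x) = u(x,f(x)) + ∫_X δ(v(y)) q(dy|x,f(x)). Then T_f maps the set M of Borel measurable v : X → ℝ with ‖v‖_ω := sup_x |v(x)|/ω(x) < ∞ into itself, there exists a unique v_f ∈ M with T_f v_f = v_f, and ‖T_f^{(n)} w − v_f‖_ω → 0 as n → ∞ for every w ∈ M. -/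

import Mathlib

open MeasureTheory ProbabilityTheory Filter

/-- The operator `T_f v (x) = u(x, f x) + ∫ δ(v(y)) q(dy | x, f x)` associated with a
stationary policy `f`. -/
noncomputable def policyOp {X A : Type*} [MeasurableSpace X] [MeasurableSpace A]
    (q : Kernel (X × A) X) (u : X × A → ℝ) (δ : ℝ → ℝ) (f : X → A)
    (v : X → ℝ) (x : X) : ℝ :=
  u (x, f x) + ∫ y, δ (v y) ∂(q (x, f x))


lemma aux_iterate_tendsto_zero (φ : ℝ → ℝ) (hφ0 : φ 0 = 0)
    (hnn : ∀ s : ℝ, 0 ≤ s → 0 ≤ φ s) (hlt : ∀ s : ℝ, 0 < s → φ s < s)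
    (hsub : ∀ a : ℝ, 0 ≤ a → ∀ b : ℝ, 0 ≤ b → φ (a + b) ≤ φ a + φ b)
    (t : ℝ) (ht : 0 ≤ t) : Tendsto (fun n => φ^[n] t) atTop (nhds 0) := by
  have hle : ∀ s : ℝ, 0 ≤ s → φ s ≤ s := by
    intro s hs
    rcases hs.eq_or_lt with h | h
    · simp [← h, hφ0]
    · exact (hlt s h).le
  have hnn' : ∀ n, 0 ≤ φ^[n] t := by
    intro n; induction n with
    | zero => simpa
    | succ n ih => rw [Function.iterate_succ_apply']; exact hnn _ ih
  have hanti : Antitone (fun n => φ^[n] t) := by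
    refine antitone_nat_of_succ_le fun n => ?_
    rw [Function.iterate_succ_apply']
    exact hle _ (hnn' n)
  have hbdd : BddBelow (Set.range fun n => φ^[n] t) := ⟨0, by rintro x ⟨n, rfl⟩; exact hnn' n⟩
  have htend := tendsto_atTop_ciInf hanti hbdd
  set L := ⨅ n, φ^[n] t with hL
  have hL0 : 0 ≤ L := le_ciInf hnn'
  have hLle : ∀ n, L ≤ φ^[n] t := fun n => ciInf_le hbdd n
  rcases hL0.eq_or_lt with h | h
  · rwa [← h] at htend
  · exfalso
    have key : ∀ n, φ^[n+1] t ≤ φ L + (φ^[n] t - L) := by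
      intro n
      rw [Function.iterate_succ_apply']
      calc φ (φ^[n] t) = φ (L + (φ^[n] t - L)) := by ring_nf
        _ ≤ φ L + φ (φ^[n] t - L) := hsub L h.le _ (sub_nonneg.2 (hLle n))
        _ ≤ φ L + (φ^[n] t - L) := by
            gcongr; exact hle _ (sub_nonneg.2 (hLle n))
    have h1 : Tendsto (fun n => φ^[n+1] t) atTop (nhds L) := htend.comp (tendsto_add_atTop_nat 1)
    have h2 : Tendsto (fun n => φ L + (φ^[n] t - L)) atTop (nhds (φ L)) := by
      have := htend.sub_const L
      simpa using (tendsto_const_nhds (x := φ L)).add this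
    have := le_of_tendsto_of_tendsto' h1 h2 key
    exact absurd this (not_le.2 (hlt L h))

lemma aux_abs_integral {Y : Type*} [MeasurableSpace Y] (μ : MeasureTheory.Measure Y) (g : Y → ℝ) :
    |∫ y, g y ∂μ| ≤ ∫ y, |g y| ∂μ := by
  simpa [Real.norm_eq_abs] using norm_integral_le_integral_norm (μ := μ) g

section Aux
variable {X A : Type*} [MeasurableSpace X] [MeasurableSpace A]
  (q : Kernel (X × A) X) (ω : X → ℝ) (u : X × A → ℝ) (δ γ : ℝ → ℝ) (f : X → A)

lemma aux_int (hδmeas : Measurable δ) (hδle : ∀ t : ℝ, |δ t| ≤ |t|)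
    (v : X → ℝ) (hv : Measurable v) (c : ℝ) (hvc : ∀ x, |v x| ≤ c * ω x)
    (x : X) (hint : Integrable ω (q (x, f x))) :
    Integrable (fun y => δ (v y)) (q (x, f x)) := by
  refine (hint.const_mul c).mono ((hδmeas.comp hv).aestronglyMeasurable) (ae_of_all _ fun y => ?_)
  simp only [Real.norm_eq_abs]
  exact ((hδle (v y)).trans (hvc y)).trans (le_abs_self _)

lemma aux_contract (hω1 : ∀ x, 1 ≤ ω x)
    (hδmeas : Measurable δ) (hδle : ∀ t : ℝ, |δ t| ≤ |t|)
    (hγm : MonotoneOn γ (Set.Ici 0)) (hγz : γ 0 = 0) (hγnn : ∀ s : ℝ, 0 ≤ s → 0 ≤ γ s)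
    (hδγ : ∀ z₁ z₂ : ℝ, |δ z₁ - δ z₂| ≤ γ |z₁ - z₂|)
    (hγω : ∀ x : X, ∀ y : ℝ, 0 < y → γ (ω x * y) ≤ ω x * γ y)
    (α : ℝ)
    (hq : ∀ x, Integrable ω (q (x, f x)) ∧ ∫ y, ω y ∂(q (x, f x)) ≤ α * ω x)
    (v w : X → ℝ) (hv : Measurable v) (hw : Measurable w)
    (cv cw : ℝ) (hvc : ∀ x, |v x| ≤ cv * ω x) (hwc : ∀ x, |w x| ≤ cw * ω x)
    (c : ℝ) (hc : 0 ≤ c) (hvw : ∀ x, |v x - w x| ≤ c * ω x) :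
    ∀ x, |policyOp q u δ f v x - policyOp q u δ f w x| ≤ (α * γ c) * ω x := by
  intro x
  have iv := aux_int q ω δ f hδmeas hδle v hv cv hvc x (hq x).1
  have iw := aux_int q ω δ f hδmeas hδle w hw cw hwc x (hq x).1
  have hpt : ∀ y, |δ (v y) - δ (w y)| ≤ γ c * ω y := by
    intro y
    have hωy : (0:ℝ) < ω y := lt_of_lt_of_le one_pos (hω1 y)
    have h1 : |δ (v y) - δ (w y)| ≤ γ |v y - w y| := hδγ _ _
    have h2 : γ |v y - w y| ≤ γ (c * ω y) :=
      hγm (Set.mem_Ici.2 (abs_nonneg _)) (Set.mem_Ici.2 (mul_nonneg hc hωy.le)) (hvw y)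
    have h3 : γ (c * ω y) ≤ γ c * ω y := by
      rcases hc.eq_or_lt with h | h
      · simp [← h, hγz]
      · calc γ (c * ω y) = γ (ω y * c) := by rw [mul_comm]
          _ ≤ ω y * γ c := hγω y c h
          _ = γ c * ω y := mul_comm _ _
    linarith
  have key : |policyOp q u δ f v x - policyOp q u δ f w x|
      = |∫ y, (δ (v y) - δ (w y)) ∂(q (x, f x))| := by
    rw [integral_sub iv iw]
    simp only [policyOp]
    rw [add_sub_add_left_eq_sub]
  rw [key]
  calc |∫ y, (δ (v y) - δ (w y)) ∂(q (x, f x))|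
      ≤ ∫ y, |δ (v y) - δ (w y)| ∂(q (x, f x)) := aux_abs_integral _ _
    _ ≤ ∫ y, γ c * ω y ∂(q (x, f x)) :=
        integral_mono (iv.sub iw).abs ((hq x).1.const_mul (γ c)) hpt
    _ = γ c * ∫ y, ω y ∂(q (x, f x)) := integral_const_mul _ _
    _ ≤ γ c * (α * ω x) := mul_le_mul_of_nonneg_left (hq x).2 (hγnn c hc)
    _ = (α * γ c) * ω x := by ring

lemma aux_mem [IsSFiniteKernel q] (hω1 : ∀ x, 1 ≤ ω x)
    (hu : Measurable u) (hf : Measurable f)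
    (z : ℝ) (huf : ∀ x, |u (x, f x)| ≤ z * ω x)
    (hδmeas : Measurable δ) (hδle : ∀ t : ℝ, |δ t| ≤ |t|)
    (α : ℝ)
    (hq : ∀ x, Integrable ω (q (x, f x)) ∧ ∫ y, ω y ∂(q (x, f x)) ≤ α * ω x)
    (v : X → ℝ) (hv : Measurable v) (c : ℝ) (hc : 0 ≤ c) (hvc : ∀ x, |v x| ≤ c * ω x) :
    Measurable (policyOp q u δ f v) ∧ ∀ x, |policyOp q u δ f v x| ≤ (z + c * α) * ω x := by
  constructor
  · have h1 : Measurable fun x => u (x, f x) := hu.comp (measurable_id.prodMk hf)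
    have h2 : StronglyMeasurable fun p : X × A => ∫ y, δ (v y) ∂(q p) := by
      have hsm : StronglyMeasurable fun pr : (X × A) × X => δ (v pr.2) :=
        ((hδmeas.comp hv).comp measurable_snd).stronglyMeasurable
      exact hsm.integral_kernel_prod_right'
    exact h1.add (h2.measurable.comp (measurable_id.prodMk hf))
  · intro x
    have iv := aux_int q ω δ f hδmeas hδle v hv c hvc x (hq x).1
    have hI : |∫ y, δ (v y) ∂(q (x, f x))| ≤ c * (α * ω x) :=
      calc |∫ y, δ (v y) ∂(q (x, f x))| ≤ ∫ y, |δ (v y)| ∂(q (x, f x)) :=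
          aux_abs_integral _ _
        _ ≤ ∫ y, c * ω y ∂(q (x, f x)) :=
          integral_mono iv.abs ((hq x).1.const_mul c)
            (fun y => (hδle (v y)).trans (hvc y))
        _ = c * ∫ y, ω y ∂(q (x, f x)) := integral_const_mul _ _
        _ ≤ c * (α * ω x) := mul_le_mul_of_nonneg_left (hq x).2 hc
    calc |policyOp q u δ f v x| ≤ |u (x, f x)| + |∫ y, δ (v y) ∂(q (x, f x))| := abs_add_le _ _
      _ ≤ z * ω x + c * (α * ω x) := add_le_add (huf x) hI
      _ = (z + c * α) * ω x := by ring

end Aux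

/-- For a Borel measurable selector `f`, the operator `T_f` maps the space of
measurable `ω`-bounded functions into itself, it has there a unique fixed point
`v_f`, and the iterates `T_f⁽ⁿ⁾ w` converge to `v_f` in the weighted sup-norm. -/
theorem policy_operator_fixed_point
    {X A : Type*}
    [MetricSpace X] [SecondCountableTopology X] [MeasurableSpace X] [BorelSpace X] [Nonempty X]
    [MetricSpace A] [SecondCountableTopology A] [MeasurableSpace A] [BorelSpace A] [Nonempty A]
    (D : Set (X × A)) (hD : MeasurableSet D) (hDne : ∀ x : X, ∃ a : A, (x, a) ∈ D)
    (q : Kernel (X × A) X) [IsMarkovKernel q]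
    (ω : X → ℝ) (hωm : Measurable ω) (hω1 : ∀ x, 1 ≤ ω x)
    (u : X × A → ℝ) (hu : Measurable u)
    (z : ℝ) (hz : 0 < z) (huω : ∀ p ∈ D, |u p| ≤ z * ω p.1)
    (δ : ℝ → ℝ) (γ : ℝ → ℝ)
    (hγm : MonotoneOn γ (Set.Ici 0)) (hγ0 : ∀ s : ℝ, 0 ≤ s → 0 ≤ γ s)
    (hγlt : ∀ s : ℝ, 0 < s → γ s < s)
    (hδγ : ∀ z₁ z₂ : ℝ, |δ z₁ - δ z₂| ≤ γ |z₁ - z₂|)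
    (hδm : Monotone δ) (hδ0 : δ 0 = 0)
    (hγsub : ∀ y : ℝ, 0 ≤ y → ∀ s : ℝ, 0 ≤ s → γ (y + s) ≤ γ y + γ s)
    (hγω : ∀ x : X, ∀ y : ℝ, 0 < y → γ (ω x * y) ≤ ω x * γ y)
    (α : ℝ) (hα : 0 < α)
    (hωq : ∀ p ∈ D, Integrable ω (q p) ∧ ∫ y, ω y ∂(q p) ≤ α * ω p.1)
    (hαcase : α ≤ 1 ∨ (1 < α ∧ ∀ s : ℝ, 0 < s → α * γ s < s))
    (f : X → A) (hf : Measurable f) (hfD : ∀ x, (x, f x) ∈ D) :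
    (∀ v : X → ℝ, Measurable v → (∃ c : ℝ, ∀ x, |v x| ≤ c * ω x) →
      Measurable (policyOp q u δ f v) ∧ ∃ c : ℝ, ∀ x, |policyOp q u δ f v x| ≤ c * ω x) ∧
    ∃ vf : X → ℝ, Measurable vf ∧ (∃ c : ℝ, ∀ x, |vf x| ≤ c * ω x) ∧
      policyOp q u δ f vf = vf ∧
      (∀ w : X → ℝ, Measurable w → (∃ c : ℝ, ∀ x, |w x| ≤ c * ω x) →
        policyOp q u δ f w = w → w = vf) ∧
      (∀ w : X → ℝ, Measurable w → (∃ c : ℝ, ∀ x, |w x| ≤ c * ω x) →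
        Tendsto (fun n : ℕ => ⨆ x : X, |(policyOp q u δ f)^[n] w x - vf x| / ω x)
          atTop (nhds 0)) := by
  -- basic facts
  have hωpos : ∀ x, (0:ℝ) < ω x := fun x => lt_of_lt_of_le one_pos (hω1 x)
  have hγz : γ 0 = 0 := by
    by_contra h
    have hpos : 0 < γ 0 := (hγ0 0 le_rfl).lt_of_ne (Ne.symm h)
    have h1 : γ 0 ≤ γ (γ 0) := hγm (Set.mem_Ici.2 le_rfl) (Set.mem_Ici.2 hpos.le) hpos.le
    have h2 : γ (γ 0) < γ 0 := hγlt _ hpos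
    linarith
  have hγle : ∀ s : ℝ, 0 ≤ s → γ s ≤ s := by
    intro s hs
    rcases hs.eq_or_lt with h | h
    · simp [← h, hγz]
    · exact (hγlt s h).le
  have hδmeas : Measurable δ := hδm.measurable
  have hδle : ∀ t : ℝ, |δ t| ≤ |t| := by
    intro t
    have := hδγ t 0
    simp only [hδ0, sub_zero] at this
    exact this.trans (hγle _ (abs_nonneg _))
  have hq : ∀ x, Integrable ω (q (x, f x)) ∧ ∫ y, ω y ∂(q (x, f x)) ≤ α * ω x :=
    fun x => hωq _ (hfD x)
  have huf : ∀ x, |u (x, f x)| ≤ z * ω x := fun x => huω _ (hfD x)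
  have hbnd_nn : ∀ (v : X → ℝ) (c : ℝ), (∀ x, |v x| ≤ c * ω x) → 0 ≤ c := by
    intro v c h
    obtain ⟨x0⟩ := (inferInstance : Nonempty X)
    by_contra hc
    push_neg at hc
    have : c * ω x0 < 0 := mul_neg_of_neg_of_pos hc (hωpos x0)
    linarith [abs_nonneg (v x0), h x0]
  -- the comparison function φ
  set T := policyOp q u δ f with hT
  set φ : ℝ → ℝ := fun s => α * γ s with hφ
  have hφ0 : φ 0 = 0 := by simp [hφ, hγz]
  have hφnn : ∀ s : ℝ, 0 ≤ s → 0 ≤ φ s := fun s hs => mul_nonneg hα.le (hγ0 s hs)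
  have hφlt : ∀ s : ℝ, 0 < s → φ s < s := by
    intro s hs
    rcases hαcase with h1 | ⟨_, h2⟩
    · calc φ s = α * γ s := rfl
        _ ≤ 1 * γ s := mul_le_mul_of_nonneg_right h1 (hγ0 s hs.le)
        _ = γ s := one_mul _
        _ < s := hγlt s hs
    · exact h2 s hs
  have hφle : ∀ s : ℝ, 0 ≤ s → φ s ≤ s := by
    intro s hs
    rcases hs.eq_or_lt with h | h
    · simp [← h, hφ0]
    · exact (hφlt s h).le
  have hφsub : ∀ a : ℝ, 0 ≤ a → ∀ b : ℝ, 0 ≤ b → φ (a + b) ≤ φ a + φ b := by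
    intro a ha b hb
    have := hγsub a ha b hb
    calc φ (a + b) = α * γ (a + b) := rfl
      _ ≤ α * (γ a + γ b) := mul_le_mul_of_nonneg_left this hα.le
      _ = φ a + φ b := by ring
  have hφiter : ∀ t : ℝ, 0 ≤ t → Tendsto (fun n => φ^[n] t) atTop (nhds 0) :=
    fun t ht => aux_iterate_tendsto_zero φ hφ0 hφnn hφlt hφsub t ht
  have hφiternn : ∀ t : ℝ, 0 ≤ t → ∀ n, 0 ≤ φ^[n] t := by
    intro t ht n
    induction n with
    | zero => simpa
    | succ n ih => rw [Function.iterate_succ_apply']; exact hφnn _ ih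
  -- abbreviations for aux lemmas
  have mem := fun v hv c hc hvc =>
    aux_mem q ω u δ f hω1 hu hf z huf hδmeas hδle α hq v hv c hc hvc
  have contract := fun v w hv hw cv cw hvc hwc c hc hvw =>
    aux_contract q ω u δ γ f hω1 hδmeas hδle hγm hγz hγ0 hδγ hγω α hq
      v w hv hw cv cw hvc hwc c hc hvw
  constructor
  · -- first conjunct
    intro v hv ⟨c, hvc⟩
    have hc0 : 0 ≤ c := hbnd_nn v c hvc
    obtain ⟨h1, h2⟩ := mem v hv c hc0 hvc
    exact ⟨h1, z + c * α, h2⟩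
  -- the iterates from 0
  set vseq : ℕ → X → ℝ := fun n => T^[n] (fun _ => 0) with hvseq
  have hseq : ∀ n, Measurable (vseq n) ∧ ∃ c, 0 ≤ c ∧ ∀ x, |vseq n x| ≤ c * ω x := by
    intro n
    induction n with
    | zero => exact ⟨measurable_const, 0, le_rfl, fun x => by simp [hvseq]⟩
    | succ n ih =>
      obtain ⟨hmeas, c, hc0, hc⟩ := ih
      have hstep := mem (vseq n) hmeas c hc0 hc
      have heq : vseq (n+1) = T (vseq n) := by
        simp only [hvseq, Function.iterate_succ_apply']
      refine ⟨by rw [heq]; exact hstep.1, z + c * α, ?_, by rw [heq]; exact hstep.2⟩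
      positivity
  have hdiff : ∀ n, ∀ x, |vseq (n+1) x - vseq n x| ≤ φ^[n] z * ω x := by
    intro n
    induction n with
    | zero =>
      intro x
      simpa [hvseq, hT, policyOp, hδ0] using huf x
    | succ n ih =>
      have heq1 : vseq (n+2) = T (vseq (n+1)) := by
        simp only [hvseq, Function.iterate_succ_apply']
      have heq2 : vseq (n+1) = T (vseq n) := by
        simp only [hvseq, Function.iterate_succ_apply']
      obtain ⟨hm1, c1, hc10, hc1⟩ := hseq (n+1)
      obtain ⟨hm2, c2, hc20, hc2⟩ := hseq n
      intro x
      have hcon := contract (vseq (n+1)) (vseq n) hm1 hm2 c1 c2 hc1 hc2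
        (φ^[n] z) (hφiternn z hz.le n) ih x
      rw [congrFun heq1 x, congrFun heq2 x]
      calc |T (vseq (n+1)) x - T (vseq n) x| ≤ (α * γ (φ^[n] z)) * ω x := hcon
        _ = φ^[n+1] z * ω x := by rw [Function.iterate_succ_apply']
  -- Cauchy property
  have hcauchy : ∀ ε : ℝ, 0 < ε → ∃ N, ∀ m, N ≤ m → ∀ x, |vseq m x - vseq N x| ≤ ε * ω x := by
    intro ε hε
    have hρ : 0 < ε - φ ε := sub_pos.2 (hφlt ε hε)
    obtain ⟨N, hN⟩ := (Metric.tendsto_atTop.mp (hφiter z hz.le)) (ε - φ ε) hρ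
    have hNz : φ^[N] z ≤ ε - φ ε := by
      have := hN N le_rfl
      rw [Real.dist_eq, sub_zero] at this
      exact (le_abs_self _).trans this.le
    refine ⟨N, ?_⟩
    intro m hm
    induction m, hm using Nat.le_induction with
    | base =>
      intro x
      simp only [sub_self, abs_zero]
      exact mul_nonneg hε.le (hωpos x).le
    | succ m hm ih =>
      intro x
      obtain ⟨hm1, c1, hc10, hc1⟩ := hseq m
      obtain ⟨hm2, c2, hc20, hc2⟩ := hseq N
      have h1 : |vseq (m+1) x - vseq (N+1) x| ≤ φ ε * ω x := by
        have heq1 : vseq (m+1) = T (vseq m) := by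
          simp only [hvseq, Function.iterate_succ_apply']
        have heq2 : vseq (N+1) = T (vseq N) := by
          simp only [hvseq, Function.iterate_succ_apply']
        rw [congrFun heq1 x, congrFun heq2 x]
        exact contract (vseq m) (vseq N) hm1 hm2 c1 c2 hc1 hc2 ε hε.le ih x
      have h2 : |vseq (N+1) x - vseq N x| ≤ (ε - φ ε) * ω x := by
        refine (hdiff N x).trans ?_
        exact mul_le_mul_of_nonneg_right hNz (hωpos x).le
      calc |vseq (m+1) x - vseq N x|
          ≤ |vseq (m+1) x - vseq (N+1) x| + |vseq (N+1) x - vseq N x| := abs_sub_le _ _ _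
        _ ≤ φ ε * ω x + (ε - φ ε) * ω x := add_le_add h1 h2
        _ = ε * ω x := by ring
  -- pointwise limit
  have hcau2 : ∀ x, CauchySeq (fun n => vseq n x) := by
    intro x
    rw [Metric.cauchySeq_iff']
    intro ε hε
    have hεx : 0 < ε / (2 * ω x) := div_pos hε (by linarith [hωpos x])
    obtain ⟨N, hN⟩ := hcauchy _ hεx
    refine ⟨N, fun n hn => ?_⟩
    rw [Real.dist_eq]
    calc |vseq n x - vseq N x| ≤ ε / (2 * ω x) * ω x := hN n hn x
      _ = ε / 2 := by
          have h0 : ω x ≠ 0 := (hωpos x).ne'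
          field_simp
      _ < ε := by linarith
  have hex : ∀ x, ∃ l, Tendsto (fun n => vseq n x) atTop (nhds l) :=
    fun x => cauchySeq_tendsto_of_complete (hcau2 x)
  choose vf hvf using hex
  have hvfmeas : Measurable vf :=
    measurable_of_tendsto_metrizable' atTop (fun n => (hseq n).1) (tendsto_pi_nhds.2 hvf)
  -- uniform closeness of the iterates to vf
  have hclose : ∀ ε : ℝ, 0 < ε → ∃ N, ∀ n, N ≤ n → ∀ x, |vseq n x - vf x| ≤ ε * ω x := by
    intro ε hε
    obtain ⟨N, hN⟩ := hcauchy (ε/2) (half_pos hε)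
    refine ⟨N, fun n hn x => ?_⟩
    have htend : Tendsto (fun m => |vseq n x - vseq m x|) atTop (nhds |vseq n x - vf x|) :=
      (tendsto_const_nhds.sub (hvf x)).abs
    refine le_of_tendsto htend ?_
    filter_upwards [eventually_ge_atTop N] with m hm
    calc |vseq n x - vseq m x| ≤ |vseq n x - vseq N x| + |vseq N x - vseq m x| := abs_sub_le _ _ _
      _ ≤ ε/2 * ω x + ε/2 * ω x := by
          refine add_le_add (hN n hn x) ?_
          rw [abs_sub_comm]
          exact hN m hm x
      _ = ε * ω x := by ring
  have hφle' : ∀ s : ℝ, 0 ≤ s → α * γ s ≤ s := hφle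
  have hφlt' : ∀ s : ℝ, 0 < s → α * γ s < s := hφlt
  have habs : ∀ a b : ℝ, |a - b| ≤ |a| + |b| := fun a b => by
    rw [sub_eq_add_neg]
    exact (abs_add_le _ _).trans (by rw [abs_neg])
  -- bound for vf
  obtain ⟨N1, hN1⟩ := hclose 1 one_pos
  obtain ⟨hmN1, c1, hc10, hc1⟩ := hseq N1
  have hvfb : ∀ x, |vf x| ≤ (c1 + 1) * ω x := by
    intro x
    have h1 : |vf x - vseq N1 x| ≤ 1 * ω x := by
      rw [abs_sub_comm]; exact hN1 N1 le_rfl x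
    calc |vf x| = |(vf x - vseq N1 x) + vseq N1 x| := by ring_nf
      _ ≤ |vf x - vseq N1 x| + |vseq N1 x| := abs_add_le _ _
      _ ≤ 1 * ω x + c1 * ω x := add_le_add h1 (hc1 x)
      _ = (c1 + 1) * ω x := by ring
  have hc1p0 : (0:ℝ) ≤ c1 + 1 := by linarith
  -- vf is a fixed point
  have hfix : T vf = vf := by
    funext x
    have ha : Tendsto (fun n => vseq (n+1) x) atTop (nhds (vf x)) :=
      (hvf x).comp (tendsto_add_atTop_nat 1)
    have hb : Tendsto (fun n => vseq (n+1) x) atTop (nhds (T vf x)) := by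
      rw [Metric.tendsto_atTop]
      intro ε hε
      have hεx : 0 < ε / (2 * ω x) := div_pos hε (by linarith [hωpos x])
      obtain ⟨N, hN⟩ := hclose _ hεx
      refine ⟨N, fun n hn => ?_⟩
      rw [Real.dist_eq]
      obtain ⟨hmn, cn, hcn0, hcn⟩ := hseq n
      have heq : vseq (n+1) = T (vseq n) := by
        simp only [hvseq, Function.iterate_succ_apply']
      have hcon := contract (vseq n) vf hmn hvfmeas cn (c1+1) hcn hvfb
        (ε / (2 * ω x)) hεx.le (hN n hn) x
      rw [congrFun heq x]
      calc |T (vseq n) x - T vf x| ≤ (α * γ (ε / (2 * ω x))) * ω x := hcon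
        _ ≤ (ε / (2 * ω x)) * ω x :=
            mul_le_mul_of_nonneg_right (hφle' _ hεx.le) (hωpos x).le
        _ = ε / 2 := by
            have h0 : ω x ≠ 0 := (hωpos x).ne'
            field_simp
        _ < ε := by linarith
    exact tendsto_nhds_unique hb ha
  -- uniqueness
  have huniq : ∀ w : X → ℝ, Measurable w → (∃ c : ℝ, ∀ x, |w x| ≤ c * ω x) →
      T w = w → w = vf := by
    rintro w hw ⟨cw, hwc⟩ hwfix
    have hcw0 : 0 ≤ cw := hbnd_nn w cw hwc
    set S : Set ℝ := {c | 0 ≤ c ∧ ∀ x, |w x - vf x| ≤ c * ω x} with hS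
    have hmemS : (cw + (c1 + 1)) ∈ S := by
      refine ⟨by linarith, fun x => ?_⟩
      calc |w x - vf x| ≤ |w x| + |vf x| := habs _ _
        _ ≤ cw * ω x + (c1 + 1) * ω x := add_le_add (hwc x) (hvfb x)
        _ = (cw + (c1 + 1)) * ω x := by ring
    have hbddS : BddBelow S := ⟨0, fun c hc => hc.1⟩
    have hneS : S.Nonempty := ⟨_, hmemS⟩
    set cs := sInf S with hcs
    have hcs0 : 0 ≤ cs := le_csInf hneS fun c hc => hc.1
    have hmemc : ∀ x, |w x - vf x| ≤ cs * ω x := by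
      intro x
      have hlb : |w x - vf x| / ω x ≤ cs :=
        le_csInf hneS fun c hc => (div_le_iff₀ (hωpos x)).2 (hc.2 x)
      calc |w x - vf x| = |w x - vf x| / ω x * ω x :=
            (div_mul_cancel₀ _ (hωpos x).ne').symm
        _ ≤ cs * ω x := mul_le_mul_of_nonneg_right hlb (hωpos x).le
    rcases hcs0.eq_or_lt with h | h
    · funext x
      have h0 : |w x - vf x| ≤ 0 := by
        have := hmemc x
        rw [← h] at this
        simpa using this
      have := abs_nonpos_iff.mp h0
      linarith [sub_eq_zero.mp this, le_of_eq (sub_eq_zero.mp this)]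
    · exfalso
      have hcon := contract w vf hw hvfmeas cw (c1+1) hwc hvfb cs hcs0 hmemc
      have hSφ : (α * γ cs) ∈ S := by
        refine ⟨mul_nonneg hα.le (hγ0 _ hcs0), fun x => ?_⟩
        rw [← congrFun hwfix x, ← congrFun hfix x]
        exact hcon x
      have h1 := csInf_le hbddS hSφ
      have h2 := hφlt' cs h
      rw [← hcs] at h1
      linarith
  -- convergence of the iterates
  have hconv : ∀ w : X → ℝ, Measurable w → (∃ c : ℝ, ∀ x, |w x| ≤ c * ω x) →
      Tendsto (fun n : ℕ => ⨆ x : X, |T^[n] w x - vf x| / ω x) atTop (nhds 0) := by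
    rintro w hw ⟨cw, hwc⟩
    have hcw0 : 0 ≤ cw := hbnd_nn w cw hwc
    set c0 := cw + (c1 + 1) with hc0d
    have hc00 : 0 ≤ c0 := by positivity
    have hwvf : ∀ x, |w x - vf x| ≤ c0 * ω x := by
      intro x
      calc |w x - vf x| ≤ |w x| + |vf x| := habs _ _
        _ ≤ cw * ω x + (c1 + 1) * ω x := add_le_add (hwc x) (hvfb x)
        _ = c0 * ω x := by rw [hc0d]; ring
    have hiter : ∀ n, Measurable (T^[n] w) ∧ (∃ c, 0 ≤ c ∧ ∀ x, |T^[n] w x| ≤ c * ω x) ∧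
        ∀ x, |T^[n] w x - vf x| ≤ φ^[n] c0 * ω x := by
      intro n
      induction n with
      | zero => exact ⟨hw, ⟨cw, hcw0, hwc⟩, by simpa using hwvf⟩
      | succ n ih =>
        obtain ⟨hm, ⟨c, hcge, hcb⟩, hd⟩ := ih
        have heq : T^[n+1] w = T (T^[n] w) := Function.iterate_succ_apply' T n w
        have hstep := mem (T^[n] w) hm c hcge hcb
        refine ⟨by rw [heq]; exact hstep.1,
          ⟨z + c * α, by positivity, by rw [heq]; exact hstep.2⟩, ?_⟩
        intro x
        have hcon := contract (T^[n] w) vf hm hvfmeas c (c1+1) hcb hvfb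
          (φ^[n] c0) (hφiternn c0 hc00 n) hd x
        have hkey : |T (T^[n] w) x - vf x| ≤ (α * γ (φ^[n] c0)) * ω x := by
          rw [← congrFun hfix x]
          exact hcon
        rw [congrFun heq x]
        calc |T (T^[n] w) x - vf x| ≤ (α * γ (φ^[n] c0)) * ω x := hkey
          _ = φ^[n+1] c0 * ω x := by
              simp only [Function.iterate_succ_apply', hφ]
    have hub : ∀ n, (⨆ x : X, |T^[n] w x - vf x| / ω x) ≤ φ^[n] c0 := by
      intro n
      exact ciSup_le fun x => (div_le_iff₀ (hωpos x)).2 ((hiter n).2.2 x)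
    have hlb : ∀ n, 0 ≤ ⨆ x : X, |T^[n] w x - vf x| / ω x := by
      intro n
      obtain ⟨x0⟩ := (inferInstance : Nonempty X)
      have hbddA : BddAbove (Set.range fun x : X => |T^[n] w x - vf x| / ω x) := by
        refine ⟨φ^[n] c0, ?_⟩
        rintro r ⟨x, rfl⟩
        exact (div_le_iff₀ (hωpos x)).2 ((hiter n).2.2 x)
      exact le_trans (div_nonneg (abs_nonneg _) (hωpos x0).le) (le_ciSup hbddA x0)
    exact tendsto_of_tendsto_of_tendsto_of_le_of_le tendsto_const_nhds
      (hφiter c0 hc00) hlb hub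
  exact ⟨vf, hvfmeas, ⟨c1 + 1, hvfb⟩, hfix, huniq, hconv⟩
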